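/- arXiv:1808.08468 — 2 statements merged into one kernel-verified Lean document; each statement's English description precedes it below -/
import Mathlib

section
/- Let H be a real inner product space, let K ⊆ H be a set, and let u₁, u₂ ∈ K. Assume that for every v ∈ K one has (1/2)‖v‖² − (1/2)‖u₁‖² ≥ ⟪u₂, v − u₁⟫. Then u₁ = u₂. -/
/-- Abstract Hilbert-space core of Theorem 3.1: if `u₁, u₂ ∈ K` and
`(1/2)‖v‖² - (1/2)‖u₁‖² ≥ ⟪u₂, v - u₁⟫` for all `v ∈ K`, then `u₁ = u₂`. -/
theorem critical_point_eq_representative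
    {H : Type*} [NormedAddCommGroup H] [InnerProductSpace ℝ H]
    (K : Set H) (u₁ u₂ : H) (hu₁ : u₁ ∈ K) (hu₂ : u₂ ∈ K)
    (h : ∀ v ∈ K, (1 / 2 : ℝ) * ‖v‖ ^ 2 - (1 / 2 : ℝ) * ‖u₁‖ ^ 2 ≥
      (inner ℝ u₂ (v - u₁) : ℝ)) :
    u₁ = u₂ := by
  have h2 := h u₂ hu₂
  rw [inner_sub_right, real_inner_self_eq_norm_sq] at h2
  have hkey : (1/2 : ℝ) * ‖u₁ - u₂‖ ^ 2 ≤ 0 := by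
    have : ‖u₁ - u₂‖ ^ 2 = ‖u₁‖ ^ 2 - 2 * inner ℝ u₂ u₁ + ‖u₂‖ ^ 2 := by
      rw [← real_inner_self_eq_norm_sq, inner_sub_sub_self,
        real_inner_self_eq_norm_sq, real_inner_self_eq_norm_sq,
        real_inner_comm]
      ring
    rw [this]; linarith
  have : ‖u₁ - u₂‖ ^ 2 ≤ 0 := by linarith
  have := pow_eq_zero_iff (n := 2) (by norm_num) |>.mp
    (le_antisymm this (by positivity))
  rw [norm_eq_zero, sub_eq_zero] at this
  exact this
end

section
/- Let H be a real Hilbert space, let K ⊆ H be a convex set, and let u₁ ∈ K be a minimizer over K of the functional I(u) = (1/2)‖u‖² − φ(u), where φ : H → ℝ is Fréchet differentiable at u₁ with derivative Dφ(u₁) ∈ H'. Suppose there exists u₂ ∈ K such that ⟪u₂, w⟫ = ⟨Dφ(u₁), w⟩ for all w ∈ H. Then u₁ = u₂, and consequently u₁ satisfies ⟪u₁, w⟫ = ⟨Dφ(u₁), w⟩ for all w ∈ H, i.e. u₁ is a critical point of the unconstrained functional I on all of H. -/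
/-- Full abstract variational scheme (Lemma 2.4 + Theorem 3.1): if `u₁`
minimizes `I(u) = (1/2)‖u‖² - φ(u)` over a convex set `K`, with `φ` Fréchet
differentiable at `u₁`, and the Riesz representative `u₂` of `Dφ(u₁)` lies in
`K`, then `u₁ = u₂` and `u₁` is an unconstrained critical point of `I`. -/
theorem constrained_min_is_unconstrained_critical_point
    {H : Type*} [NormedAddCommGroup H] [InnerProductSpace ℝ H] [CompleteSpace H]
    (K : Set H) (hK : Convex ℝ K) (φ : H → ℝ) (u₁ : H) (hu₁ : u₁ ∈ K)
    (Dφu₁ : H →L[ℝ] ℝ) (hφ : HasFDerivAt φ Dφu₁ u₁)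
    (hmin : ∀ v ∈ K,
      (1 / 2 : ℝ) * ‖u₁‖ ^ 2 - φ u₁ ≤ (1 / 2 : ℝ) * ‖v‖ ^ 2 - φ v)
    (u₂ : H) (hu₂ : u₂ ∈ K) (hrep : ∀ w : H, (inner ℝ u₂ w : ℝ) = Dφu₁ w) :
    u₁ = u₂ ∧ ∀ w : H, (inner ℝ u₁ w : ℝ) = Dφu₁ w := by
  have hd : u₂ - u₁ ∈ posTangentConeAt K u₁ :=
    sub_mem_posTangentConeAt_of_segment_subset (hK.segment_subset hu₁ hu₂)
  -- derivative of I at u₁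
  have hI : HasFDerivAt (fun u : H => (1 / 2 : ℝ) * ‖u‖ ^ 2 - φ u)
      ((innerSL ℝ u₁) - Dφu₁) u₁ := by
    have h1 : HasFDerivAt (fun u : H => ‖u‖ ^ 2)
        (2 • (innerSL ℝ u₁).comp (ContinuousLinearMap.id ℝ H)) u₁ := by
      simpa using (hasFDerivAt_id u₁).norm_sq
    have h2 := (h1.const_mul (1 / 2 : ℝ)).sub hφ
    refine h2.congr_fderiv ?_
    ext w
    simp [two_smul]
    ring
  have hminOn : IsLocalMinOn (fun u : H => (1 / 2 : ℝ) * ‖u‖ ^ 2 - φ u) K u₁ :=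
    ((isMinOn_iff.mpr hmin).localize : _)
  have key : (0 : ℝ) ≤ ((innerSL ℝ u₁) - Dφu₁) (u₂ - u₁) :=
    hminOn.hasFDerivWithinAt_nonneg hI.hasFDerivWithinAt hd
  have key' : (0 : ℝ) ≤ (inner ℝ u₁ (u₂ - u₁) : ℝ) - (inner ℝ u₂ (u₂ - u₁) : ℝ) := by
    simpa [hrep] using key
  have hsq : ‖u₂ - u₁‖ ^ 2 ≤ 0 := by
    have : (inner ℝ (u₂ - u₁) (u₂ - u₁) : ℝ) ≤ 0 := by
      have := key'
      rw [inner_sub_left]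
      linarith
    simpa [real_inner_self_eq_norm_sq] using this
  have heq : u₁ = u₂ := by
    have : ‖u₂ - u₁‖ = 0 := by nlinarith [norm_nonneg (u₂ - u₁), sq_nonneg ‖u₂ - u₁‖]
    have := norm_eq_zero.mp this
    exact (sub_eq_zero.mp this).symm
  exact ⟨heq, fun w => heq ▸ hrep w⟩
end
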